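/- Let ρ be a Fox pairing in a cocommutative involutive Hopf algebra A with antipode s and counit ε. Then for all x, y ∈ A (in Sweedler notation): ρ(s(x), s(y)) = s(x') · ρ(x'', y') · s(y''). -/

import Mathlib

open scoped TensorProduct

/-- `Coalgebra.Repr` as it was in Mathlib of December 2024 (index type a field). -/
structure OldCoalgebraRepr (R : Type*) {A : Type*}
    [CommSemiring R] [AddCommMonoid A] [Module R A] [CoalgebraStruct R A] (a : A) where
  {ι : Type*}
  (index : Finset ι)
  (left : ι → A)
  (right : ι → A)
  (eq : ∑ i ∈ index, left i ⊗ₜ[R] right i = CoalgebraStruct.comul a)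

def OldCoalgebraRepr.toRepr {R : Type*} {A : Type*}
    [CommSemiring R] [AddCommMonoid A] [Module R A] [CoalgebraStruct R A] {a : A}
    (r : OldCoalgebraRepr R a) : Coalgebra.Repr R a r.ι where
  index := r.index
  left := r.left
  right := r.right
  eq := r.eq

section aux

variable {K A : Type*} [CommRing K] [Ring A] [HopfAlgebra K A]

lemma aux_counit_smul_left {a : A} (r : OldCoalgebraRepr K a) :
    ∑ i ∈ r.index, Coalgebra.counit (R := K) (r.right i) • r.left i = a := by
  have h := congrArg (TensorProduct.rid K A) (Coalgebra.sum_tmul_counit_eq (R := K) r.toRepr)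
  simp only [map_sum, TensorProduct.rid_tmul, one_smul] at h
  exact h

lemma aux_counit_smul_right {a : A} (r : OldCoalgebraRepr K a) :
    ∑ i ∈ r.index, Coalgebra.counit (R := K) (r.left i) • r.right i = a := by
  have h := congrArg (TensorProduct.lid K A) (Coalgebra.sum_counit_tmul_eq (R := K) r.toRepr)
  simp only [map_sum, TensorProduct.lid_tmul, one_smul] at h
  exact h

variable (ρ : A →ₗ[K] A →ₗ[K] A)
    (hFox₁ : ∀ x y z : A,
      ρ x (y * z) = ρ x y * z + Coalgebra.counit (R := K) y • ρ x z)
    (hFox₂ : ∀ x y z : A,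
      ρ (x * y) z = Coalgebra.counit (R := K) y • ρ x z + x * ρ y z)

include hFox₁ in
lemma aux_rho_one (x : A) : ρ x 1 = 0 := by
  have h := hFox₁ x 1 1
  simp only [mul_one, Bialgebra.counit_one, one_smul] at h
  linear_combination (norm := module) -h

include hFox₂ in
lemma aux_one_rho (z : A) : ρ 1 z = 0 := by
  have h := hFox₂ 1 1 z
  simp only [one_mul, Bialgebra.counit_one, one_smul] at h
  linear_combination (norm := module) -h

include hFox₂ in
lemma aux_antipode_left (x z : A) (rx : OldCoalgebraRepr K x) :
    ρ (HopfAlgebra.antipode (R := K) x) z =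
      - ∑ i ∈ rx.index,
        HopfAlgebra.antipode (R := K) (rx.left i) * ρ (rx.right i) z := by
  have h0 : ρ (Coalgebra.counit (R := K) x • (1 : A)) z = 0 := by
    simp [aux_one_rho ρ hFox₂]
  rw [← HopfAlgebra.sum_antipode_mul_eq_smul rx.toRepr] at h0
  dsimp only [OldCoalgebraRepr.toRepr] at h0
  have h1 : ∀ i ∈ rx.index,
      ρ (HopfAlgebra.antipode (R := K) (rx.left i) * rx.right i) z =
        Coalgebra.counit (R := K) (rx.right i) •
          ρ (HopfAlgebra.antipode (R := K) (rx.left i)) z +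
        HopfAlgebra.antipode (R := K) (rx.left i) * ρ (rx.right i) z := fun i _ =>
    hFox₂ _ _ _
  rw [map_sum, LinearMap.coe_sum, Finset.sum_apply, Finset.sum_congr rfl h1,
    Finset.sum_add_distrib] at h0
  have h2 : ∑ i ∈ rx.index, Coalgebra.counit (R := K) (rx.right i) •
      ρ (HopfAlgebra.antipode (R := K) (rx.left i)) z =
      ρ (HopfAlgebra.antipode (R := K) x) z := by
    conv_rhs => rw [← aux_counit_smul_left rx]
    simp [map_sum, Finset.sum_apply]
  linear_combination (norm := module) h0 - h2

include hFox₁ in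
lemma aux_antipode_right (x y : A) (ry : OldCoalgebraRepr K y) :
    ρ x (HopfAlgebra.antipode (R := K) y) =
      - ∑ j ∈ ry.index,
        ρ x (ry.left j) * HopfAlgebra.antipode (R := K) (ry.right j) := by
  have h0 : ρ x (Coalgebra.counit (R := K) y • (1 : A)) = 0 := by
    simp [aux_rho_one ρ hFox₁]
  rw [← HopfAlgebra.sum_mul_antipode_eq_smul ry.toRepr] at h0
  dsimp only [OldCoalgebraRepr.toRepr] at h0
  have h1 : ∀ j ∈ ry.index,
      ρ x (ry.left j * HopfAlgebra.antipode (R := K) (ry.right j)) =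
        ρ x (ry.left j) * HopfAlgebra.antipode (R := K) (ry.right j) +
        Coalgebra.counit (R := K) (ry.left j) •
          ρ x (HopfAlgebra.antipode (R := K) (ry.right j)) := fun j _ =>
    hFox₁ _ _ _
  rw [map_sum, Finset.sum_congr rfl h1, Finset.sum_add_distrib] at h0
  have h2 : ∑ j ∈ ry.index, Coalgebra.counit (R := K) (ry.left j) •
      ρ x (HopfAlgebra.antipode (R := K) (ry.right j)) =
      ρ x (HopfAlgebra.antipode (R := K) y) := by
    conv_rhs => rw [← aux_counit_smul_right ry]
    simp [map_sum]
  linear_combination (norm := module) h0 - h2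

end aux

/-- Let `ρ` be a Fox pairing in a cocommutative involutive Hopf
algebra `A` with antipode `s` and counit `ε`.  Then for all `x, y ∈ A` (in
Sweedler notation): `ρ(s(x), s(y)) = s(x') · ρ(x'', y') · s(y'')`.  Sweedler
notation is encoded by arbitrary representations `rx`, `ry` of `Δ(x)`, `Δ(y)`
as finite sums of pure tensors. -/
theorem fox_pairing_antipode_antipode
    {K A : Type*} [CommRing K] [Ring A] [HopfAlgebra K A]
    (hcocomm : ∀ a : A,
      TensorProduct.comm K A A (Coalgebra.comul a) = Coalgebra.comul (R := K) a)
    (hinv : ∀ a : A,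
      HopfAlgebra.antipode (R := K) (HopfAlgebra.antipode (R := K) a) = a)
    (ρ : A →ₗ[K] A →ₗ[K] A)
    (hFox₁ : ∀ x y z : A,
      ρ x (y * z) = ρ x y * z + Coalgebra.counit (R := K) y • ρ x z)
    (hFox₂ : ∀ x y z : A,
      ρ (x * y) z = Coalgebra.counit (R := K) y • ρ x z + x * ρ y z)
    (x y : A) (rx : OldCoalgebraRepr K x) (ry : OldCoalgebraRepr K y) :
    ρ (HopfAlgebra.antipode (R := K) x) (HopfAlgebra.antipode (R := K) y) =
      ∑ i ∈ rx.index, ∑ j ∈ ry.index,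
        HopfAlgebra.antipode (R := K) (rx.left i) *
          ρ (rx.right i) (ry.left j) *
            HopfAlgebra.antipode (R := K) (ry.right j) := by
  rw [aux_antipode_left ρ hFox₂ x _ rx]
  have h : ∀ i ∈ rx.index,
      HopfAlgebra.antipode (R := K) (rx.left i) *
        ρ (rx.right i) (HopfAlgebra.antipode (R := K) y) =
      - ∑ j ∈ ry.index,
        HopfAlgebra.antipode (R := K) (rx.left i) *
          ρ (rx.right i) (ry.left j) *
            HopfAlgebra.antipode (R := K) (ry.right j) := by
    intro i _
    rw [aux_antipode_right ρ hFox₁ (rx.right i) y ry, mul_neg, Finset.mul_sum]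
    simp [mul_assoc]
  rw [Finset.sum_congr rfl h]
  simp
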